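/- For every d ∈ ℕ and every index i with 1 ≤ i ≤ 2^d, there exists a binary temporal partition Q ∈ 𝒞_d with |Q| ≤ d + 1 such that i is the left endpoint of some segment of Q (i.e., i = 1 or i ∈ C(Q)). -/

import Mathlib

/-- The set `𝒞_d(t)` of binary temporal partitions starting at `t`, represented as
finsets of segments `(a,b)` (each segment identified with the interval `{a,…,b}`). -/
def Cpt : ℕ → ℕ → Finset (Finset (ℕ × ℕ))
  | 0, t => {{(t, t)}}
  | d + 1, t =>
      insert {(t, t + 2 ^ (d + 1) - 1)}
        ((Cpt d t ×ˢ Cpt d (t + 2 ^ d)).image fun p => p.1 ∪ p.2)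

/-- `C(Q)`: the set of change points of `Q`, i.e. the left endpoints of its segments
other than `1`. -/
def changePts (Q : Finset (ℕ × ℕ)) : Finset ℕ :=
  (Q.image Prod.fst).erase 1

lemma triv_mem_Cpt (d t : ℕ) : ({(t, t + 2 ^ d - 1)} : Finset (ℕ × ℕ)) ∈ Cpt d t := by
  cases d with
  | zero => simp [Cpt]
  | succ d => simp [Cpt]

lemma key_Cpt (d : ℕ) : ∀ t i, t ≤ i → i ≤ t + 2 ^ d - 1 →
    ∃ Q ∈ Cpt d t, Q.card ≤ d + 1 ∧ i ∈ Q.image Prod.fst := by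
  induction d with
  | zero =>
    intro t i h1 h2
    have : i = t := by simp at h2; omega
    subst this
    exact ⟨{(i, i)}, by simp [Cpt], by simp, by simp⟩
  | succ d ih =>
    intro t i h1 h2
    have hp : 2 ^ (d + 1) = 2 ^ d + 2 ^ d := by ring
    have hpos : 0 < 2 ^ d := Nat.pow_pos (by norm_num)
    by_cases hc : i < t + 2 ^ d
    · obtain ⟨Q₁, hQ₁, hcard, hmem⟩ := ih t i h1 (by omega)
      refine ⟨Q₁ ∪ {(t + 2 ^ d, t + 2 ^ d + 2 ^ d - 1)}, ?_, ?_, ?_⟩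
      · show _ ∈ Cpt (d + 1) t
        rw [Cpt]
        refine Finset.mem_insert_of_mem ?_
        exact Finset.mem_image.mpr ⟨(Q₁, _),
          Finset.mem_product.mpr ⟨hQ₁, triv_mem_Cpt d (t + 2 ^ d)⟩, rfl⟩
      · calc (Q₁ ∪ {(t + 2 ^ d, t + 2 ^ d + 2 ^ d - 1)}).card
            ≤ Q₁.card + 1 := le_trans (Finset.card_union_le _ _) (by simp)
          _ ≤ d + 1 + 1 := by omega
      · rw [Finset.image_union]; exact Finset.mem_union_left _ hmem
    · obtain ⟨Q₂, hQ₂, hcard, hmem⟩ := ih (t + 2 ^ d) i (by omega) (by omega)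
      refine ⟨({(t, t + 2 ^ d - 1)} : Finset (ℕ × ℕ)) ∪ Q₂, ?_, ?_, ?_⟩
      · show _ ∈ Cpt (d + 1) t
        rw [Cpt]
        refine Finset.mem_insert_of_mem ?_
        exact Finset.mem_image.mpr ⟨(_, Q₂),
          Finset.mem_product.mpr ⟨triv_mem_Cpt d t, hQ₂⟩, rfl⟩
      · calc (({(t, t + 2 ^ d - 1)} : Finset (ℕ × ℕ)) ∪ Q₂).card
            ≤ 1 + Q₂.card := le_trans (Finset.card_union_le _ _) (by simp)
          _ ≤ d + 1 + 1 := by omega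
      · rw [Finset.image_union]; exact Finset.mem_union_right _ hmem

/-- For every `d ∈ ℕ` and every index `i` with `1 ≤ i ≤ 2^d`, there
exists a binary temporal partition `Q ∈ 𝒞_d` with `|Q| ≤ d + 1` such that `i` is the
left endpoint of some segment of `Q` (i.e. `i = 1` or `i ∈ C(Q)`). -/
theorem small_partition_with_left_endpoint (d i : ℕ) (hi1 : 1 ≤ i) (hi2 : i ≤ 2 ^ d) :
    ∃ Q ∈ Cpt d 1, Q.card ≤ d + 1 ∧ (i = 1 ∨ i ∈ changePts Q) := by
  obtain ⟨Q, hQ, hcard, hmem⟩ := key_Cpt d 1 i hi1 (by omega)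
  refine ⟨Q, hQ, hcard, ?_⟩
  by_cases h : i = 1
  · exact Or.inl h
  · exact Or.inr (Finset.mem_erase.mpr ⟨h, hmem⟩)
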